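/- (Integrability of the fundamental solution, first part.) For every fixed time T > 0 and every exponent p with 1 ≤ p < p_0 := (Q+2)/Q, the Kolmogorov kernel K belongs to L^p(ℝ^N × (0,T)), i.e. ∫_0^T ∫_{ℝ^N} K(x,t)^p dx dt < ∞. -/

import Mathlib

open MeasureTheory Matrix Filter

noncomputable section

/-- Partial sums of the block sizes. -/
def blockSum (m : ℕ → ℕ) (j : ℕ) : ℕ := ∑ j' ∈ Finset.range j, m j'

/-- The index of the block containing the `i`-th coordinate. -/
def blockIdx (m : ℕ → ℕ) (i : ℕ) : ℕ := sInf {j : ℕ | i < blockSum m (j + 1)}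

/-- The anisotropic dilation matrix `δ_N(r) = diag(r I_{m₀}, r³ I_{m₁}, …)`. -/
def dil (N : ℕ) (m : ℕ → ℕ) (r : ℝ) : Matrix (Fin N) (Fin N) ℝ :=
  Matrix.diagonal fun i => r ^ (2 * blockIdx m (i : ℕ) + 1)

/-- `E(t) = exp(-tB)`. -/
def Emat (N : ℕ) (B : Matrix (Fin N) (Fin N) ℝ) (t : ℝ) : Matrix (Fin N) (Fin N) ℝ :=
  NormedSpace.exp ((-t) • B)

/-- The matrix `A₀` with upper-left `m₀ × m₀` identity block and zeros elsewhere. -/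
def A0 (N m0 : ℕ) : Matrix (Fin N) (Fin N) ℝ :=
  Matrix.diagonal fun i => if (i : ℕ) < m0 then (1 : ℝ) else 0

/-- `C(t) = ∫₀ᵗ E(s) A₀ E(s)ᵀ ds` (entrywise integral). -/
def Cmat (N : ℕ) (B : Matrix (Fin N) (Fin N) ℝ) (m0 : ℕ) (t : ℝ) : Matrix (Fin N) (Fin N) ℝ :=
  Matrix.of fun i j => ∫ s in (0:ℝ)..t, (Emat N B s * A0 N m0 * (Emat N B s)ᵀ) i j

/-- The normalizing constant `C_N = (4π)^{-N/2} |det C(1)|^{-1/2}`. -/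
def CN (N : ℕ) (B : Matrix (Fin N) (Fin N) ℝ) (m0 : ℕ) : ℝ :=
  (4 * Real.pi) ^ (-(N : ℝ) / 2) * |(Cmat N B m0 1).det| ^ (-(1 : ℝ) / 2)

/-- The Kolmogorov kernel
`K(x,t) = C_N t^{-Q/2} exp(-(1/4)⟨C(1)⁻¹ δ_N(1/√t)x, δ_N(1/√t)x⟩)` for `t > 0`,
and `K(x,t) = 0` for `t ≤ 0`. -/
def Kker (N : ℕ) (m : ℕ → ℕ) (B : Matrix (Fin N) (Fin N) ℝ) (Q : ℕ)
    (x : Fin N → ℝ) (t : ℝ) : ℝ :=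
  if 0 < t then
    CN N B (m 0) * t ^ (-(Q : ℝ) / 2) *
      Real.exp (-(1 / 4) * (((Cmat N B (m 0) 1)⁻¹ *ᵥ (dil N m (1 / Real.sqrt t) *ᵥ x)) ⬝ᵥ
        (dil N m (1 / Real.sqrt t) *ᵥ x)))
  else 0

/-- The `i`-th spatial partial derivative `∂_{x_i} K(x,t)` of the kernel. -/
def DKker (N : ℕ) (m : ℕ → ℕ) (B : Matrix (Fin N) (Fin N) ℝ) (Q : ℕ) (i : Fin N)
    (x : Fin N → ℝ) (t : ℝ) : ℝ :=
  deriv (fun r => Kker N m B Q (Function.update x i r) t) (x i)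

/-- Group convolution on `ℝ^N × (0,T)`:
`(f*g)(x,t) = ∫₀ᵗ ∫_{ℝ^N} f(x - E(t-s)y, t-s) g(y,s) dy ds`. -/
def conv (N : ℕ) (B : Matrix (Fin N) (Fin N) ℝ) (f g : (Fin N → ℝ) × ℝ → ℝ) :
    (Fin N → ℝ) × ℝ → ℝ :=
  fun z => ∫ s in (0:ℝ)..z.2, ∫ y : Fin N → ℝ,
    f (z.1 - Emat N B (z.2 - s) *ᵥ y, z.2 - s) * g (y, s)

/-- Group convolution over all of `ℝ^{N+1}`:
`(f*g)(x,t) = ∫_ℝ ∫_{ℝ^N} f(x - E(t-s)y, t-s) g(y,s) dy ds`. -/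
def convAll (N : ℕ) (B : Matrix (Fin N) (Fin N) ℝ) (f g : (Fin N → ℝ) × ℝ → ℝ) :
    (Fin N → ℝ) × ℝ → ℝ :=
  fun z => ∫ s : ℝ, ∫ y : Fin N → ℝ,
    f (z.1 - Emat N B (z.2 - s) *ᵥ y, z.2 - s) * g (y, s)

/-! ### Auxiliary lemmas -/

lemma blockSum_mono (m : ℕ → ℕ) : Monotone (blockSum m) := fun _ _ h =>
  Finset.sum_le_sum_of_subset (Finset.range_subset_range.mpr h)

lemma blockIdx_eq (m : ℕ → ℕ) {i j : ℕ} (h1 : blockSum m j ≤ i)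
    (h2 : i < blockSum m (j + 1)) : blockIdx m i = j := by
  refine le_antisymm (Nat.sInf_le h2) (le_csInf ⟨j, h2⟩ ?_)
  intro j' hj'
  simp only [Set.mem_setOf_eq] at hj'
  by_contra hlt
  push_neg at hlt
  have h3 : blockSum m (j' + 1) ≤ blockSum m j := blockSum_mono m (by omega)
  omega

lemma sum_blockIdx (m : ℕ → ℕ) (k : ℕ) :
    ∑ i ∈ Finset.range (blockSum m k), (2 * blockIdx m i + 1)
      = ∑ j ∈ Finset.range k, (2 * j + 1) * m j := by
  induction k with
  | zero => simp [blockSum]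
  | succ k ih =>
    have hS : blockSum m (k + 1) = blockSum m k + m k := Finset.sum_range_succ m k
    have hsplit : ∑ i ∈ Finset.range (blockSum m (k + 1)), (2 * blockIdx m i + 1)
        = ∑ i ∈ Finset.range (blockSum m k), (2 * blockIdx m i + 1)
          + ∑ i ∈ Finset.Ico (blockSum m k) (blockSum m (k + 1)), (2 * blockIdx m i + 1) := by
      rw [Finset.range_eq_Ico,
        ← Finset.sum_Ico_consecutive _ (Nat.zero_le _) (blockSum_mono m (Nat.le_succ k)),
        ← Finset.range_eq_Ico]
    have hconst : ∑ i ∈ Finset.Ico (blockSum m k) (blockSum m (k + 1)), (2 * blockIdx m i + 1)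
        = (2 * k + 1) * m k := by
      rw [Finset.sum_congr rfl (fun i hi => by
        obtain ⟨hi1, hi2⟩ := Finset.mem_Ico.mp hi
        rw [blockIdx_eq m hi1 hi2]), Finset.sum_const, Nat.card_Ico, smul_eq_mul, hS,
        Nat.add_sub_cancel_left]
      ring
    rw [hsplit, ih, hconst, Finset.sum_range_succ]

lemma det_dil (N : ℕ) (m : ℕ → ℕ) (r : ℝ) :
    (dil N m r).det = r ^ (∑ i ∈ Finset.range N, (2 * blockIdx m i + 1)) := by
  rw [dil, Matrix.det_diagonal, Finset.prod_pow_eq_pow_sum, ← Fin.sum_univ_eq_sum_range]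

lemma posdef_lower {n : ℕ} (hn : 0 < n) {M : Matrix (Fin n) (Fin n) ℝ} (hM : M.PosDef) :
    ∃ c > 0, ∀ x : Fin n → ℝ, c * (x ⬝ᵥ x) ≤ (M *ᵥ x) ⬝ᵥ x := by
  haveI : Nonempty (Fin n) := Fin.pos_iff_nonempty.mp hn
  have hf : Continuous fun x : Fin n → ℝ => (M *ᵥ x) ⬝ᵥ x := by
    simp only [dotProduct, Matrix.mulVec]
    exact continuous_finset_sum _ fun i _ =>
      (continuous_finset_sum _ fun j _ =>
        (continuous_const.mul (continuous_apply j))).mul (continuous_apply i)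
  have hcs : IsCompact (Metric.sphere (0 : Fin n → ℝ) 1) := isCompact_sphere _ _
  have hne : (Metric.sphere (0 : Fin n → ℝ) 1).Nonempty :=
    NormedSpace.sphere_nonempty.mpr zero_le_one
  obtain ⟨x₀, hx₀, hmin⟩ := hcs.exists_isMinOn hne hf.continuousOn
  have hx₀n : ‖x₀‖ = 1 := mem_sphere_zero_iff_norm.mp hx₀
  have hx₀0 : x₀ ≠ 0 := by
    intro h; rw [h] at hx₀n; simp at hx₀n
  have hc0 : 0 < (M *ᵥ x₀) ⬝ᵥ x₀ := by
    have := hM.dotProduct_mulVec_pos hx₀0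
    simpa [dotProduct_comm] using this
  have hncast : (0 : ℝ) < (n : ℝ) := by exact_mod_cast hn
  refine ⟨(M *ᵥ x₀) ⬝ᵥ x₀ / n, div_pos hc0 hncast, fun x => ?_⟩
  rcases eq_or_ne x 0 with rfl | hx
  · simp
  · have hr : 0 < ‖x‖ := norm_pos_iff.mpr hx
    set u : Fin n → ℝ := ‖x‖⁻¹ • x with hu
    have hun : u ∈ Metric.sphere (0 : Fin n → ℝ) 1 := by
      rw [mem_sphere_zero_iff_norm, hu, norm_smul, norm_inv, norm_norm,
        inv_mul_cancel₀ hr.ne']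
    have hfu : (M *ᵥ x₀) ⬝ᵥ x₀ ≤ (M *ᵥ u) ⬝ᵥ u := hmin hun
    have hscale : (M *ᵥ x) ⬝ᵥ x = ‖x‖ ^ 2 * ((M *ᵥ u) ⬝ᵥ u) := by
      rw [hu, Matrix.mulVec_smul, smul_dotProduct, dotProduct_smul,
        smul_eq_mul, smul_eq_mul]
      field_simp
    have hbound : x ⬝ᵥ x ≤ n * ‖x‖ ^ 2 := by
      have hi : ∀ i, x i * x i ≤ ‖x‖ ^ 2 := fun i => by
        have h1 : |x i| ≤ ‖x‖ := by
          simpa [Real.norm_eq_abs] using norm_le_pi_norm x i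
        calc x i * x i = |x i| * |x i| := by rw [← abs_mul, abs_mul_self]
          _ ≤ ‖x‖ * ‖x‖ := mul_le_mul h1 h1 (abs_nonneg _) (norm_nonneg _)
          _ = ‖x‖ ^ 2 := (sq ‖x‖).symm
      calc x ⬝ᵥ x = ∑ i, x i * x i := rfl
        _ ≤ ∑ _i : Fin n, ‖x‖ ^ 2 := Finset.sum_le_sum fun i _ => hi i
        _ = n * ‖x‖ ^ 2 := by simp [Finset.sum_const, mul_comm]
    calc (M *ᵥ x₀) ⬝ᵥ x₀ / n * (x ⬝ᵥ x)
        ≤ (M *ᵥ x₀) ⬝ᵥ x₀ / n * (n * ‖x‖ ^ 2) :=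
          mul_le_mul_of_nonneg_left hbound (le_of_lt (div_pos hc0 hncast))
      _ = ‖x‖ ^ 2 * ((M *ᵥ x₀) ⬝ᵥ x₀) := by field_simp
      _ ≤ ‖x‖ ^ 2 * ((M *ᵥ u) ⬝ᵥ u) := mul_le_mul_of_nonneg_left hfu (by positivity)
      _ = (M *ᵥ x) ⬝ᵥ x := hscale.symm

lemma integrable_gauss {n : ℕ} (hn : 0 < n) {M : Matrix (Fin n) (Fin n) ℝ} (hM : M.PosDef)
    {b : ℝ} (hb : 0 < b) :
    Integrable (fun x : Fin n → ℝ => Real.exp (-(b * ((M *ᵥ x) ⬝ᵥ x)))) := by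
  obtain ⟨c, hc, hcle⟩ := posdef_lower hn hM
  have hf : Continuous fun x : Fin n → ℝ => (M *ᵥ x) ⬝ᵥ x := by
    simp only [dotProduct, Matrix.mulVec]
    exact continuous_finset_sum _ fun i _ =>
      (continuous_finset_sum _ fun j _ =>
        (continuous_const.mul (continuous_apply j))).mul (continuous_apply i)
  have hcont : Continuous fun x : Fin n → ℝ => Real.exp (-(b * ((M *ᵥ x) ⬝ᵥ x))) :=
    Real.continuous_exp.comp ((continuous_const.mul hf).neg)
  refine Integrable.mono'
    (g := fun x : Fin n → ℝ => ∏ i, Real.exp (-(b * c) * x i ^ 2))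
    (Integrable.fintype_prod fun _ => integrable_exp_neg_mul_sq (mul_pos hb hc))
    hcont.aestronglyMeasurable (Filter.Eventually.of_forall fun x => ?_)
  rw [Real.norm_eq_abs, abs_of_pos (Real.exp_pos _)]
  have hxx : x ⬝ᵥ x = ∑ i, x i ^ 2 := by
    simp [dotProduct, sq]
  have h1 : b * c * (x ⬝ᵥ x) ≤ b * ((M *ᵥ x) ⬝ᵥ x) := by
    rw [mul_assoc]; exact mul_le_mul_of_nonneg_left (hcle x) hb.le
  calc Real.exp (-(b * ((M *ᵥ x) ⬝ᵥ x))) ≤ Real.exp (-(b * c * (x ⬝ᵥ x))) :=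
        Real.exp_le_exp.mpr (by linarith)
    _ = Real.exp (∑ i, -(b * c) * x i ^ 2) := by
        rw [hxx]; congr 1
        rw [← Finset.mul_sum, neg_mul]
    _ = ∏ i, Real.exp (-(b * c) * x i ^ 2) := Real.exp_sum _ _

lemma integral_comp_mulVec {n : ℕ} {A : Matrix (Fin n) (Fin n) ℝ} (hA : A.det ≠ 0)
    {f : (Fin n → ℝ) → ℝ} (hf : Integrable f) :
    Integrable (fun x => f (A *ᵥ x)) ∧
      (∫ x, f (A *ᵥ x)) = |A.det|⁻¹ * ∫ y, f y := by
  have hmap := Real.map_matrix_volume_pi_eq_smul_volume_pi hA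
  have hLm : Measurable (Matrix.toLin' A) :=
    (Matrix.toLin' A).continuous_of_finiteDimensional.measurable
  have hasm : AEStronglyMeasurable f (Measure.map (Matrix.toLin' A) volume) := by
    rw [hmap]; exact hf.aestronglyMeasurable.smul_measure _
  have hint : Integrable f (Measure.map (Matrix.toLin' A) volume) := by
    rw [hmap]; exact hf.smul_measure ENNReal.ofReal_ne_top
  have key : (fun x => f (A *ᵥ x)) = fun x => f ((Matrix.toLin' A) x) := by
    funext x; rw [Matrix.toLin'_apply]
  constructor
  · rw [key]
    exact (integrable_map_measure hasm hLm.aemeasurable).mp hint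
  · calc (∫ x, f (A *ᵥ x)) = ∫ x, f ((Matrix.toLin' A) x) := by rw [key]
      _ = ∫ y, f y ∂(Measure.map (Matrix.toLin' A) volume) :=
          (MeasureTheory.integral_map hLm.aemeasurable hasm).symm
      _ = |A.det|⁻¹ * ∫ y, f y := by
          rw [hmap, integral_smul_measure, ENNReal.toReal_ofReal (abs_nonneg _),
            smul_eq_mul, abs_inv]

/-- **Integrability of the fundamental solution, first part.**
For every `T > 0` and `1 ≤ p < p₀ = (Q+2)/Q`, the kernel `K` belongs to
`L^p(ℝ^N × (0,T))`. -/
theorem kernel_memLp (N κ : ℕ) (m : ℕ → ℕ) (B : Matrix (Fin N) (Fin N) ℝ) (Q : ℕ)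
    (hN : 2 ≤ N)
    (hmono : ∀ j, j < κ → m (j + 1) ≤ m j) (hm1 : ∀ j, j ≤ κ → 1 ≤ m j)
    (hsum : ∑ j ∈ Finset.range (κ + 1), m j = N)
    (hQ : Q = ∑ j ∈ Finset.range (κ + 1), (2 * j + 1) * m j)
    (hB : B.trace = 0) (hC1 : (Cmat N B (m 0) 1).PosDef)
    (T : ℝ) (hT : 0 < T) (p : ℝ) (hp1 : 1 ≤ p) (hp2 : p < ((Q : ℝ) + 2) / Q) :
    IntegrableOn (fun z : (Fin N → ℝ) × ℝ => Kker N m B Q z.1 z.2 ^ p)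
      (Set.univ ×ˢ Set.Ioo 0 T) volume := by
  classical
  have hM : ((Cmat N B (m 0) 1)⁻¹).PosDef := hC1.inv
  have hNpos : 0 < N := by omega
  have hQN : N ≤ Q := by
    rw [hQ, ← hsum]
    exact Finset.sum_le_sum fun j _ => Nat.le_mul_of_pos_left _ (by omega)
  have hQpos : 0 < Q := by omega
  have hQR : (0 : ℝ) < (Q : ℝ) := by exact_mod_cast hQpos
  have hp0 : (0 : ℝ) < p := lt_of_lt_of_le one_pos hp1
  have hCN : 0 ≤ CN N B (m 0) :=
    mul_nonneg (Real.rpow_nonneg (by positivity) _) (Real.rpow_nonneg (abs_nonneg _) _)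
  have hK0 : ∀ (x : Fin N → ℝ) (t : ℝ), 0 ≤ Kker N m B Q x t := by
    intro x t
    rw [Kker]
    split_ifs with h
    · exact mul_nonneg (mul_nonneg hCN (Real.rpow_nonneg h.le _)) (Real.exp_pos _).le
    · exact le_refl 0
  have hF0 : ∀ z : (Fin N → ℝ) × ℝ, 0 ≤ Kker N m B Q z.1 z.2 ^ p :=
    fun z => Real.rpow_nonneg (hK0 _ _) p
  -- the Gaussian and its integral
  have hgint : Integrable (fun v : Fin N → ℝ =>
      Real.exp (-(p / 4 * (((Cmat N B (m 0) 1)⁻¹ *ᵥ v) ⬝ᵥ v)))) :=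
    integrable_gauss hNpos hM (by positivity)
  set J : ℝ := ∫ v : Fin N → ℝ,
    Real.exp (-(p / 4 * (((Cmat N B (m 0) 1)⁻¹ *ᵥ v) ⬝ᵥ v))) with hJdef
  -- pointwise formula for t > 0
  have hpt : ∀ (x : Fin N → ℝ) (t : ℝ), 0 < t →
      Kker N m B Q x t ^ p
        = CN N B (m 0) ^ p * t ^ (-(Q : ℝ) * p / 2) *
          Real.exp (-(p / 4 *
            (((Cmat N B (m 0) 1)⁻¹ *ᵥ (dil N m (1 / Real.sqrt t) *ᵥ x)) ⬝ᵥ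
              (dil N m (1 / Real.sqrt t) *ᵥ x)))) := by
    intro x t ht
    rw [Kker, if_pos ht]
    have h1 : (0 : ℝ) ≤ t ^ (-(Q : ℝ) / 2) := Real.rpow_nonneg ht.le _
    rw [Real.mul_rpow (mul_nonneg hCN h1) (Real.exp_pos _).le,
      Real.mul_rpow hCN h1, ← Real.rpow_mul ht.le, ← Real.exp_mul]
    congr 1
    · congr 1; ring
    · ring
  -- combinatorial identity for the determinant exponent
  have hsum' : blockSum m (κ + 1) = N := hsum
  have hQsum : ∑ i ∈ Finset.range N, (2 * blockIdx m i + 1) = Q := by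
    rw [hQ, ← sum_blockIdx m (κ + 1), hsum']
  -- determinant facts for t > 0
  have hdet : ∀ t : ℝ, 0 < t →
      (dil N m (1 / Real.sqrt t)).det = (1 / Real.sqrt t) ^ Q := by
    intro t ht; rw [det_dil, hQsum]
  have hrpos : ∀ t : ℝ, 0 < t → 0 < 1 / Real.sqrt t := by
    intro t ht
    have := Real.sqrt_pos.mpr ht
    positivity
  have hdet0 : ∀ t : ℝ, 0 < t → (dil N m (1 / Real.sqrt t)).det ≠ 0 := by
    intro t ht
    rw [hdet t ht]
    exact pow_ne_zero _ (hrpos t ht).ne'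
  have habs : ∀ t : ℝ, 0 < t →
      |(dil N m (1 / Real.sqrt t)).det|⁻¹ = t ^ ((Q : ℝ) / 2) := by
    intro t ht
    rw [hdet t ht, abs_of_pos (pow_pos (hrpos t ht) _), one_div, inv_pow, inv_inv,
      ← Real.rpow_natCast (Real.sqrt t) Q, Real.sqrt_eq_rpow, ← Real.rpow_mul ht.le]
    congr 1
    ring
  -- measurability
  have hKm : Measurable fun z : (Fin N → ℝ) × ℝ => Kker N m B Q z.1 z.2 := by
    have heq : (fun z : (Fin N → ℝ) × ℝ => Kker N m B Q z.1 z.2) = fun z =>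
        if 0 < z.2 then
          CN N B (m 0) * Real.exp (Real.log z.2 * (-(Q : ℝ) / 2)) *
            Real.exp (-(1 / 4) *
              (((Cmat N B (m 0) 1)⁻¹ *ᵥ (dil N m (1 / Real.sqrt z.2) *ᵥ z.1)) ⬝ᵥ
                (dil N m (1 / Real.sqrt z.2) *ᵥ z.1)))
        else 0 := by
      funext z
      rw [Kker]
      split_ifs with h
      · rw [Real.rpow_def_of_pos h]
      · rfl
    rw [heq]
    have hw : ∀ i : Fin N, Measurable fun z : (Fin N → ℝ) × ℝ =>
        (dil N m (1 / Real.sqrt z.2) *ᵥ z.1) i := by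
      intro i
      simp only [dil, Matrix.mulVec_diagonal, one_div]
      exact (((Real.continuous_sqrt.measurable.comp measurable_snd).inv).pow_const _).mul
        ((measurable_pi_apply i).comp measurable_fst)
    have hq : Measurable fun z : (Fin N → ℝ) × ℝ =>
        (((Cmat N B (m 0) 1)⁻¹ *ᵥ (dil N m (1 / Real.sqrt z.2) *ᵥ z.1)) ⬝ᵥ
          (dil N m (1 / Real.sqrt z.2) *ᵥ z.1)) := by
      have hrw : (fun z : (Fin N → ℝ) × ℝ =>
          (((Cmat N B (m 0) 1)⁻¹ *ᵥ (dil N m (1 / Real.sqrt z.2) *ᵥ z.1)) ⬝ᵥ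
            (dil N m (1 / Real.sqrt z.2) *ᵥ z.1)))
          = fun z => ∑ i, (∑ j, (Cmat N B (m 0) 1)⁻¹ i j *
              (dil N m (1 / Real.sqrt z.2) *ᵥ z.1) j) *
              (dil N m (1 / Real.sqrt z.2) *ᵥ z.1) i := by
        funext z
        simp [dotProduct, Matrix.mulVec]
      rw [hrw]
      exact Finset.measurable_sum _ fun i _ =>
        (Finset.measurable_sum _ fun j _ => (measurable_const.mul (hw j))).mul (hw i)
    refine Measurable.ite (measurableSet_lt measurable_const measurable_snd) ?_
      measurable_const
    exact (measurable_const.mul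
        (Real.measurable_exp.comp ((Real.measurable_log.comp measurable_snd).mul_const _))).mul
      (Real.measurable_exp.comp (hq.const_mul _))
  have hFm : Measurable fun z : (Fin N → ℝ) × ℝ => Kker N m B Q z.1 z.2 ^ p :=
    (Real.continuous_rpow_const hp0.le).measurable.comp hKm
  -- reduce to a product measure
  rw [IntegrableOn, Measure.volume_eq_prod, ← Measure.prod_restrict, Measure.restrict_univ]
  rw [integrable_prod_iff' hFm.aestronglyMeasurable]
  constructor
  · -- for a.e. t, integrable in x
    filter_upwards [ae_restrict_mem measurableSet_Ioo] with t ht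
    obtain ⟨ht0, _⟩ := ht
    have hint := (integral_comp_mulVec (hdet0 t ht0) hgint).1
    have h2 : (fun x : Fin N → ℝ => Kker N m B Q x t ^ p) = fun x =>
        CN N B (m 0) ^ p * t ^ (-(Q : ℝ) * p / 2) *
          Real.exp (-(p / 4 *
            (((Cmat N B (m 0) 1)⁻¹ *ᵥ (dil N m (1 / Real.sqrt t) *ᵥ x)) ⬝ᵥ
              (dil N m (1 / Real.sqrt t) *ᵥ x)))) := funext fun x => hpt x t ht0
    simpa only [h2] using hint.const_mul _
  · -- the t-integral is finite
    set r : ℝ := -(Q : ℝ) * p / 2 + (Q : ℝ) / 2 with hrdef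
    have hr1 : -1 < r := by
      have h3 : p * (Q : ℝ) < (Q : ℝ) + 2 := by
        have := (lt_div_iff₀ hQR).mp hp2
        linarith [this]
      rw [hrdef]
      nlinarith
    have hint0 : IntegrableOn (fun t : ℝ => CN N B (m 0) ^ p * J * t ^ r)
        (Set.Ioo 0 T) volume := by
      have h4 : IntegrableOn (fun t : ℝ => t ^ r) (Set.Ioc 0 T) volume :=
        (intervalIntegrable_iff_integrableOn_Ioc_of_le hT.le).mp
          (intervalIntegral.intervalIntegrable_rpow' hr1)
      exact ((h4.mono_set Set.Ioo_subset_Ioc_self).const_mul _)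
    refine hint0.congr_fun (fun t ht => ?_) measurableSet_Ioo
    obtain ⟨ht0, _⟩ := ht
    have hcv := (integral_comp_mulVec (hdet0 t ht0) hgint).2
    calc CN N B (m 0) ^ p * J * t ^ r
        = CN N B (m 0) ^ p * J * (t ^ (-(Q : ℝ) * p / 2) * t ^ ((Q : ℝ) / 2)) := by
          rw [hrdef, ← Real.rpow_add ht0]
      _ = CN N B (m 0) ^ p * t ^ (-(Q : ℝ) * p / 2) *
            (|(dil N m (1 / Real.sqrt t)).det|⁻¹ * J) := by
          rw [habs t ht0]; ring
      _ = CN N B (m 0) ^ p * t ^ (-(Q : ℝ) * p / 2) *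
            ∫ x : Fin N → ℝ, Real.exp (-(p / 4 *
              (((Cmat N B (m 0) 1)⁻¹ *ᵥ (dil N m (1 / Real.sqrt t) *ᵥ x)) ⬝ᵥ
                (dil N m (1 / Real.sqrt t) *ᵥ x)))) := by
          rw [hcv]
      _ = ∫ x : Fin N → ℝ, CN N B (m 0) ^ p * t ^ (-(Q : ℝ) * p / 2) *
            Real.exp (-(p / 4 *
              (((Cmat N B (m 0) 1)⁻¹ *ᵥ (dil N m (1 / Real.sqrt t) *ᵥ x)) ⬝ᵥ
                (dil N m (1 / Real.sqrt t) *ᵥ x)))) := by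
          rw [MeasureTheory.integral_const_mul]
      _ = ∫ x : Fin N → ℝ, Kker N m B Q x t ^ p := by
          congr 1
          funext x
          rw [hpt x t ht0]
      _ = ∫ x : Fin N → ℝ, ‖Kker N m B Q x t ^ p‖ := by
          congr 1
          funext x
          rw [Real.norm_eq_abs, abs_of_nonneg (hF0 (x, t))]

end
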